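/- Let x ≥ 2 be real, let 0 ≤ γ ≤ s < 1 be real numbers, and let d ≥ 2 be an integer. If γ^{d−1} ≤ (x−1)/(x(d+2)), then G(d,x,s,γ) ≥ G(d+1,x,s,γ). -/
import Mathlib


/-- `G(d,x,s,γ) = ((d+x)s/(d+1) + x(1−s)) · (s − (s/(d+1))γ^d)`. -/
noncomputable def Gfun (d : ℕ) (x s γ : ℝ) : ℝ :=
  (((d : ℝ) + x) * s / ((d : ℝ) + 1) + x * (1 - s)) *
    (s - s / ((d : ℝ) + 1) * γ ^ d)

set_option maxHeartbeats 1000000 in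
/-- For `x ≥ 2`, `0 ≤ γ ≤ s < 1` and an integer `d ≥ 2`, if
`γ^{d−1} ≤ (x−1)/(x(d+2))` then `G(d,x,s,γ) ≥ G(d+1,x,s,γ)`. -/
theorem Gfun_decreasing (x s γ : ℝ) (d : ℕ)
    (hx : 2 ≤ x) (hγ0 : 0 ≤ γ) (hγs : γ ≤ s) (hs : s < 1) (hd : 2 ≤ d)
    (hcond : γ ^ (d - 1) ≤ (x - 1) / (x * ((d : ℝ) + 2))) :
    Gfun d x s γ ≥ Gfun (d + 1) x s γ := by
  have hγ1 : γ < 1 := lt_of_le_of_lt hγs hs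
  have hs0 : 0 ≤ s := le_trans hγ0 hγs
  set D : ℝ := (d : ℝ) with hDdef
  have hD : (2:ℝ) ≤ D := by rw [hDdef]; exact_mod_cast hd
  set t : ℝ := γ ^ (d - 1) with ht
  have ht0 : 0 ≤ t := pow_nonneg hγ0 _
  have htγ : t ≤ γ := by
    have h := pow_le_pow_of_le_one hγ0 hγ1.le (show 1 ≤ d - 1 by omega)
    simpa using h
  have hgd : γ ^ d = t * γ := by
    rw [ht, ← pow_succ]; congr 1; omega
  have hgd1 : γ ^ (d + 1) = t * γ ^ 2 := by
    rw [ht, ← pow_add]; congr 1; omega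
  have hxv : (0:ℝ) < x * (D + 2) := by nlinarith
  have hcond' : t * (x * (D + 2)) ≤ x - 1 := by
    have := (le_div_iff₀ hxv).mp hcond
    linarith
  have hu : (0:ℝ) < D + 1 := by linarith
  have hv : (0:ℝ) < D + 2 := by linarith
  rw [ge_iff_le, ← sub_nonneg]
  have key : Gfun d x s γ - Gfun (d + 1) x s γ =
      s * (s * (D + 2) * (x - 1) * ((D + 1) - t * γ) -
        (D + 1) * ((D + 1 + x) * s + x * (1 - s) * (D + 2)) * (t * γ) *
          ((D + 2) - γ * (D + 1))) / ((D + 1) ^ 2 * (D + 2) ^ 2) := by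
    unfold Gfun
    push_cast
    rw [hgd, hgd1]
    rw [hDdef]
    field_simp
    ring
  rw [key]
  apply div_nonneg _ (by positivity)
  apply mul_nonneg hs0
  have h1 : 0 ≤ (x - 1 - t * (x * (D + 2))) * ((D + 1) * γ * ((D + 2) - γ * (D + 1))) := by
    apply mul_nonneg (by linarith)
    apply mul_nonneg (mul_nonneg hu.le hγ0)
    nlinarith
  have h2 : 0 ≤ s * (D + 1) ^ 2 * (x - 1) * t * γ * ((D + 2) - γ * (D + 1)) := by
    apply mul_nonneg
    apply mul_nonneg
    apply mul_nonneg
    apply mul_nonneg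
    · positivity
    · linarith
    · exact ht0
    · exact hγ0
    · nlinarith
  have h3 : 0 ≤ (x - 1) * ((D + 1) * (D + 2)) * (s - γ) := by
    apply mul_nonneg (mul_nonneg (by linarith) (by positivity)) (by linarith)
  have h4 : 0 ≤ (x - 1) * γ ^ 2 * ((D + 1) ^ 2 - s * (D + 2)) := by
    apply mul_nonneg (mul_nonneg (by linarith) (by positivity))
    nlinarith
  have h5 : 0 ≤ (x - 1) * s * (D + 2) * γ * (γ - t) := by
    apply mul_nonneg
    apply mul_nonneg
    apply mul_nonneg
    apply mul_nonneg (by linarith) hs0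
    · linarith
    · exact hγ0
    · linarith
  have hsum : s * (D + 2) * (x - 1) * ((D + 1) - t * γ) -
        (D + 1) * ((D + 1 + x) * s + x * (1 - s) * (D + 2)) * (t * γ) *
          ((D + 2) - γ * (D + 1)) =
      (x - 1 - t * (x * (D + 2))) * ((D + 1) * γ * ((D + 2) - γ * (D + 1))) +
      s * (D + 1) ^ 2 * (x - 1) * t * γ * ((D + 2) - γ * (D + 1)) +
      (x - 1) * ((D + 1) * (D + 2)) * (s - γ) +
      (x - 1) * γ ^ 2 * ((D + 1) ^ 2 - s * (D + 2)) +
      (x - 1) * s * (D + 2) * γ * (γ - t) := by ring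
  linarith [h1, h2, h3, h4, h5]
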